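/- Converse of Fine's theorem: if ρ is any probability mass function on {-1,1}⁴ (quadruples (A₁,A₂,B₁,B₂) of ±1 values), then the correlation vector (E[A₁B₁], E[A₁B₂], E[A₂B₁], E[A₂B₂]) satisfies all eight CHSH inequalities: each of -w+x+y+z, w-x+y+z, w+x-y+z, w+x+y-z lies in [-2,2]. -/

import Mathlib

/-- Sign value of a hidden variable index: `0 ↦ -1`, `1 ↦ +1`. -/
noncomputable def sgn (i : Fin 2) : ℝ := if i = 0 then -1 else 1

lemma sgn_cases (i : Fin 2) : sgn i = -1 ∨ sgn i = 1 := by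
  unfold sgn; split <;> simp

lemma sum_bound (ρ : (Fin 4 → Fin 2) → ℝ)
    (hnn : ∀ f, 0 ≤ ρ f) (hsum : ∑ f, ρ f = 1)
    (c : (Fin 4 → Fin 2) → ℝ) (hc : ∀ f, |c f| ≤ 2) :
    ∑ f, ρ f * c f ∈ Set.Icc (-2 : ℝ) 2 := by
  constructor
  · have h : ∑ f, ρ f * (-2 : ℝ) ≤ ∑ f, ρ f * c f := by
      apply Finset.sum_le_sum
      intro f _
      have := (abs_le.mp (hc f)).1
      nlinarith [hnn f]
    calc (-2 : ℝ) = ∑ f, ρ f * (-2 : ℝ) := by rw [← Finset.sum_mul, hsum]; ring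
    _ ≤ _ := h
  · have h : ∑ f, ρ f * c f ≤ ∑ f, ρ f * (2 : ℝ) := by
      apply Finset.sum_le_sum
      intro f _
      have := (abs_le.mp (hc f)).2
      nlinarith [hnn f]
    calc _ ≤ ∑ f, ρ f * (2 : ℝ) := h
    _ = 2 := by rw [← Finset.sum_mul, hsum]; ring

lemma chsh_combo (e₁ e₂ e₃ e₄ : ℝ)
    (he₁ : e₁ = -1 ∨ e₁ = 1) (he₂ : e₂ = -1 ∨ e₂ = 1)
    (he₃ : e₃ = -1 ∨ e₃ = 1) (he₄ : e₄ = -1 ∨ e₄ = 1)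
    (hprod : e₁ * e₂ * e₃ * e₄ = -1)
    (ρ : (Fin 4 → Fin 2) → ℝ)
    (hnn : ∀ f, 0 ≤ ρ f) (hsum : ∑ f, ρ f = 1) :
    e₁ * ∑ f, ρ f * (sgn (f 0) * sgn (f 2)) +
    e₂ * ∑ f, ρ f * (sgn (f 0) * sgn (f 3)) +
    e₃ * ∑ f, ρ f * (sgn (f 1) * sgn (f 2)) +
    e₄ * ∑ f, ρ f * (sgn (f 1) * sgn (f 3)) ∈ Set.Icc (-2 : ℝ) 2 := by
  have heq : e₁ * ∑ f, ρ f * (sgn (f 0) * sgn (f 2)) +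
      e₂ * ∑ f, ρ f * (sgn (f 0) * sgn (f 3)) +
      e₃ * ∑ f, ρ f * (sgn (f 1) * sgn (f 2)) +
      e₄ * ∑ f, ρ f * (sgn (f 1) * sgn (f 3)) =
      ∑ f, ρ f * (e₁ * (sgn (f 0) * sgn (f 2)) + e₂ * (sgn (f 0) * sgn (f 3)) +
        e₃ * (sgn (f 1) * sgn (f 2)) + e₄ * (sgn (f 1) * sgn (f 3))) := by
    simp only [Finset.mul_sum, ← Finset.sum_add_distrib]
    apply Finset.sum_congr rfl
    intro f _
    ring
  rw [heq]
  apply sum_bound ρ hnn hsum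
  intro f
  rcases sgn_cases (f 0) with h0 | h0 <;> rcases sgn_cases (f 1) with h1 | h1 <;>
    rcases sgn_cases (f 2) with h2 | h2 <;> rcases sgn_cases (f 3) with h3 | h3 <;>
    rcases he₁ with rfl | rfl <;> rcases he₂ with rfl | rfl <;>
    rcases he₃ with rfl | rfl <;> rcases he₄ with rfl | rfl <;>
    (rw [h0, h1, h2, h3]; norm_num at hprod <;> norm_num [abs_le])

theorem fine_theorem_converse
    (ρ : (Fin 4 → Fin 2) → ℝ)
    (hnn : ∀ f, 0 ≤ ρ f) (hsum : ∑ f, ρ f = 1)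
    (w x y z : ℝ)
    (hw : ∑ f, ρ f * (sgn (f 0) * sgn (f 2)) = w)
    (hx : ∑ f, ρ f * (sgn (f 0) * sgn (f 3)) = x)
    (hy : ∑ f, ρ f * (sgn (f 1) * sgn (f 2)) = y)
    (hz : ∑ f, ρ f * (sgn (f 1) * sgn (f 3)) = z) :
    -w + x + y + z ∈ Set.Icc (-2 : ℝ) 2 ∧
    w - x + y + z ∈ Set.Icc (-2 : ℝ) 2 ∧
    w + x - y + z ∈ Set.Icc (-2 : ℝ) 2 ∧
    w + x + y - z ∈ Set.Icc (-2 : ℝ) 2 := by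
  subst hw hx hy hz
  refine ⟨?_, ?_, ?_, ?_⟩
  · have h := chsh_combo (-1) 1 1 1 (Or.inl rfl) (Or.inr rfl) (Or.inr rfl) (Or.inr rfl) (by norm_num) ρ hnn hsum
    exact ⟨by linarith [h.1], by linarith [h.2]⟩
  · have h := chsh_combo 1 (-1) 1 1 (Or.inr rfl) (Or.inl rfl) (Or.inr rfl) (Or.inr rfl) (by norm_num) ρ hnn hsum
    exact ⟨by linarith [h.1], by linarith [h.2]⟩
  · have h := chsh_combo 1 1 (-1) 1 (Or.inr rfl) (Or.inr rfl) (Or.inl rfl) (Or.inr rfl) (by norm_num) ρ hnn hsum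
    exact ⟨by linarith [h.1], by linarith [h.2]⟩
  · have h := chsh_combo 1 1 1 (-1) (Or.inr rfl) (Or.inr rfl) (Or.inr rfl) (Or.inl rfl) (by norm_num) ρ hnn hsum
    exact ⟨by linarith [h.1], by linarith [h.2]⟩
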